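/- Let J ⊆ {1,…,P} satisfy (H_J). Then the matrix V = Φ A^[J] Φ* is the orthogonal projector of ℝ^Q onto the subspace Φ(G_J), and tr(V) = dim(G_J). -/

import Mathlib

open Matrix MeasureTheory ProbabilityTheory

/-- The cospace `G_J = Ker D_J^*`. -/
def GJ {N P : ℕ} (D : Matrix (Fin N) (Fin P) ℝ) (J : Set (Fin P)) :
    Submodule ℝ (Fin N → ℝ) where
  carrier := {x | ∀ j ∈ J, Dᵀ.mulVec x j = 0}
  add_mem' := by
    intro a b ha hb j hj
    simp [Matrix.mulVec_add, ha j hj, hb j hj]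
  zero_mem' := by intro j hj; simp
  smul_mem' := by
    intro c a ha j hj
    simp [Matrix.mulVec_smul, ha j hj]

/-- Condition `(H_J)`: `Ker Φ ∩ G_J = {0}`. -/
def HJcond {N Q P : ℕ} (Φ : Matrix (Fin Q) (Fin N) ℝ) (D : Matrix (Fin N) (Fin P) ℝ)
    (J : Set (Fin P)) : Prop :=
  ∀ x : Fin N → ℝ, Φ.mulVec x = 0 → x ∈ GJ D J → x = 0

/-- The columns of `U` form a basis of the subspace `G`. -/
def ColBasis {N r : ℕ} (U : Matrix (Fin N) (Fin r) ℝ) (G : Submodule ℝ (Fin N → ℝ)) : Prop :=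
  LinearIndependent ℝ (fun k : Fin r => (fun i => U i k)) ∧
  Submodule.span ℝ (Set.range (fun k : Fin r => (fun i => U i k))) = G

/-- The matrix `A^[J] = U (U* Φ* Φ U)⁻¹ U*` built from a basis matrix `U` of `G_J`. -/
noncomputable def AJmat {N Q r : ℕ} (Φ : Matrix (Fin Q) (Fin N) ℝ)
    (U : Matrix (Fin N) (Fin r) ℝ) : Matrix (Fin N) (Fin N) ℝ :=
  U * (Uᵀ * Φᵀ * Φ * U)⁻¹ * Uᵀ

/-- Orthogonal projection onto a subspace of `Fin n → ℝ` (Euclidean inner product). -/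
noncomputable def projG {n : ℕ} (G : Submodule ℝ (Fin n → ℝ)) (v : Fin n → ℝ) : Fin n → ℝ :=
  (EuclideanSpace.equiv (Fin n) ℝ)
    (Submodule.orthogonalProjectionOnto
      (G.map ((EuclideanSpace.equiv (Fin n) ℝ).symm.toLinearEquiv :
          (Fin n → ℝ) →ₗ[ℝ] EuclideanSpace ℝ (Fin n)))
      ((EuclideanSpace.equiv (Fin n) ℝ).symm v))

/-- `V = Φ A^[J] Φ*` is the orthogonal projector of `ℝ^Q` onto `Φ(G_J)`, and
`tr(V) = dim(G_J)`. -/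
theorem AJ_projector_trace
    {N Q P : ℕ} (hN : 0 < N) (hQ : 0 < Q) (hP : 0 < P)
    (Φ : Matrix (Fin Q) (Fin N) ℝ) (D : Matrix (Fin N) (Fin P) ℝ)
    (J : Set (Fin P)) (hHJ : HJcond Φ D J)
    (r : ℕ) (U : Matrix (Fin N) (Fin r) ℝ) (hU : ColBasis U (GJ D J)) :
    (∀ v : Fin Q → ℝ,
        (Φ * AJmat Φ U * Φᵀ).mulVec v
          = projG ((GJ D J).map Φ.mulVecLin) v) ∧
    (Φ * AJmat Φ U * Φᵀ).trace = (Module.finrank ℝ (GJ D J) : ℝ) := by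
  obtain ⟨hind, hspan⟩ := hU
  set B := Φ * U with hB
  set M := Uᵀ * Φᵀ * Φ * U with hM
  -- range of U.mulVecLin is G
  have hrangeU : LinearMap.range U.mulVecLin = GJ D J := by
    rw [Matrix.range_mulVecLin]; exact hspan
  have hmemG : ∀ c : Fin r → ℝ, U.mulVec c ∈ GJ D J := fun c => by
    rw [← hrangeU]; exact ⟨c, rfl⟩
  have hUinj : ∀ c : Fin r → ℝ, U.mulVec c = 0 → c = 0 := by
    intro c hc
    exact Matrix.mulVec_injective_iff.mpr hind (by simpa using hc)
  have hBinj : ∀ c : Fin r → ℝ, B.mulVec c = 0 → c = 0 := by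
    intro c hc
    rw [hB, ← Matrix.mulVec_mulVec] at hc
    exact hUinj c (hHJ _ hc (hmemG c))
  have hMB : M = Bᵀ * B := by
    rw [hM, hB, Matrix.transpose_mul, Matrix.mul_assoc]
  have hMunit : IsUnit M.det := by
    rw [← Matrix.isUnit_iff_isUnit_det, ← Matrix.mulVec_injective_iff_isUnit]
    have key : ∀ c : Fin r → ℝ, M.mulVec c = 0 → c = 0 := by
      intro c hc
      apply hBinj
      apply (dotProduct_self_eq_zero (v := B.mulVec c)).mp
      have h1 : c ⬝ᵥ M.mulVec c = B.mulVec c ⬝ᵥ B.mulVec c := by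
        conv_lhs => rw [hMB, ← Matrix.mulVec_mulVec, Matrix.dotProduct_mulVec,
          Matrix.vecMul_transpose]
      rw [← h1, hc, dotProduct_zero]
    intro c d hcd
    have h0 : M.mulVec (c - d) = 0 := by rw [Matrix.mulVec_sub, hcd, sub_self]
    exact sub_eq_zero.mp (key _ h0)
  -- V as B * M⁻¹ * Bᵀ
  have hV : Φ * AJmat Φ U * Φᵀ = B * M⁻¹ * Bᵀ := by
    rw [AJmat, hB, hM, Matrix.transpose_mul]
    simp [Matrix.mul_assoc]
  -- Bᵀ * V = Bᵀ
  have hBV : Bᵀ * (B * M⁻¹ * Bᵀ) = Bᵀ := by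
    rw [← Matrix.mul_assoc, ← Matrix.mul_assoc, ← hMB, Matrix.mul_nonsing_inv _ hMunit,
      Matrix.one_mul]
  -- the image subspace equals range of B.mulVecLin
  have hK : (GJ D J).map Φ.mulVecLin = LinearMap.range B.mulVecLin := by
    rw [hB, Matrix.mulVecLin_mul, LinearMap.range_comp, hrangeU]
  constructor
  · intro v
    rw [projG]
    symm
    have hproj :
        (Submodule.orthogonalProjectionOnto
          (((GJ D J).map Φ.mulVecLin).map
            ((EuclideanSpace.equiv (Fin Q) ℝ).symm.toLinearEquiv :
              (Fin Q → ℝ) →ₗ[ℝ] EuclideanSpace ℝ (Fin Q)))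
          ((EuclideanSpace.equiv (Fin Q) ℝ).symm v) : EuclideanSpace ℝ (Fin Q))
        = (EuclideanSpace.equiv (Fin Q) ℝ).symm ((Φ * AJmat Φ U * Φᵀ).mulVec v) := by
      apply Submodule.eq_starProjection_of_mem_of_inner_eq_zero
      · refine Submodule.mem_map_of_mem ?_
        rw [hK, hV]
        refine ⟨M⁻¹.mulVec (Bᵀ.mulVec v), ?_⟩
        simp [Matrix.mulVecLin_apply, Matrix.mulVec_mulVec, Matrix.mul_assoc]
      · rintro w ⟨w', hw', rfl⟩
        rw [hK] at hw'
        obtain ⟨c, rfl⟩ := hw'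
        have : ((EuclideanSpace.equiv (Fin Q) ℝ).symm v -
            (EuclideanSpace.equiv (Fin Q) ℝ).symm ((Φ * AJmat Φ U * Φᵀ).mulVec v))
            = (EuclideanSpace.equiv (Fin Q) ℝ).symm (v - (Φ * AJmat Φ U * Φᵀ).mulVec v) := by
          simp
        rw [this]
        have hinner : ∀ x y : Fin Q → ℝ,
            (inner ℝ ((EuclideanSpace.equiv (Fin Q) ℝ).symm x)
              ((EuclideanSpace.equiv (Fin Q) ℝ).symm y) : ℝ) = x ⬝ᵥ y := by
          intro x y
          simp [dotProduct, PiLp.inner_apply, mul_comm]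
        rw [show ((EuclideanSpace.equiv (Fin Q) ℝ).symm.toLinearEquiv :
              (Fin Q → ℝ) →ₗ[ℝ] EuclideanSpace ℝ (Fin Q)) (B.mulVecLin c)
            = (EuclideanSpace.equiv (Fin Q) ℝ).symm (B.mulVec c) from rfl]
        rw [hinner, hV]
        have hz : Bᵀ.mulVec (v - (B * M⁻¹ * Bᵀ).mulVec v) = 0 := by
          rw [Matrix.mulVec_sub, Matrix.mulVec_mulVec, hBV, sub_self]
        rw [dotProduct_comm, ← Matrix.vecMul_transpose,
          ← Matrix.dotProduct_mulVec, hz, dotProduct_zero]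
    rw [hproj]
    simp
    rfl
  · rw [hV, Matrix.trace_mul_comm, ← Matrix.mul_assoc, ← hMB,
      Matrix.mul_nonsing_inv _ hMunit, Matrix.trace_one]
    have hfr : Module.finrank ℝ
        (Submodule.span ℝ (Set.range fun k : Fin r => (fun i => U i k))) = r := by
      simpa using Module.finrank_eq_card_basis (Module.Basis.span hind)
    rw [hspan] at hfr
    simp [hfr]
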